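/- A density matrix ρ on C^d is coherent (i.e. has a nonzero off-diagonal entry in the fixed basis) if and only if there exists a Hermitian matrix W whose diagonal entries all lie in [m, M] with min_i W_ii = m and max_i W_ii = M, such that Tr(Wρ) < m or Tr(Wρ) > M. -/

import Mathlib

open Matrix ComplexOrder

lemma aux_trace_std {d : ℕ} (k l : Fin d) (c : ℂ) (ρ : Matrix (Fin d) (Fin d) ℂ) :
    Matrix.trace (Matrix.single k l c * ρ) = c * ρ l k := by
  rw [Matrix.trace, Finset.sum_eq_single k]
  · simp [Matrix.diag]
  · intro b _ hb
    simp [Matrix.diag, Matrix.single_mul_apply_of_ne _ _ _ b b hb]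
  · simp

lemma aux_ct_std {d : ℕ} (k l : Fin d) (c : ℂ) :
    (Matrix.single k l c)ᴴ = Matrix.single l k (star c) := by
  ext i j
  simp only [Matrix.conjTranspose_apply, Matrix.single, Matrix.of_apply]
  by_cases h : l = i ∧ k = j
  · rw [if_pos ⟨h.2, h.1⟩, if_pos h]
  · rw [if_neg (fun hh => h ⟨hh.2, hh.1⟩), if_neg h, star_zero]

lemma aux_diag_nonneg {d : ℕ} {ρ : Matrix (Fin d) (Fin d) ℂ} (hρ : ρ.PosSemidef)
    (i : Fin d) : 0 ≤ (ρ i i).re ∧ (ρ i i).im = 0 := by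
  have h := (Matrix.posSemidef_iff_dotProduct_mulVec.mp hρ).2 (Pi.single i 1)
  have heq : star (Pi.single i (1:ℂ)) ⬝ᵥ ρ *ᵥ (Pi.single i 1) = ρ i i := by
    have hst : star (Pi.single i (1:ℂ)) = (Pi.single i 1 : Fin d → ℂ) := by
      funext j
      rcases em (i = j) with h | h <;> simp [Pi.single_apply, h]
    rw [hst, single_dotProduct, one_mul, Matrix.mulVec_single]
    simp
  rw [heq, Complex.le_def] at h
  exact ⟨h.1, h.2.symm⟩

/-- A density matrix `ρ` is coherent (has a nonzero off-diagonal entry) iff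
there is a Hermitian matrix `W` with all diagonal entries in `[m, M]`, minimum `m` and
maximum `M`, such that `Tr(Wρ) < m` or `Tr(Wρ) > M`. -/
theorem stmt_3 {d : ℕ} (m M : ℝ) (hmM : m ≤ M)
    (ρ : Matrix (Fin d) (Fin d) ℂ) (hρ : ρ.PosSemidef) (htr : ρ.trace = 1) :
    (∃ k l, k ≠ l ∧ ρ k l ≠ 0) ↔
      ∃ W : Matrix (Fin d) (Fin d) ℂ,
        W.IsHermitian ∧
        (∀ i, m ≤ (W i i).re) ∧ (∃ i, (W i i).re = m) ∧
        (∀ i, (W i i).re ≤ M) ∧ (∃ i, (W i i).re = M) ∧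
        ((Matrix.trace (W * ρ)).re < m ∨ M < (Matrix.trace (W * ρ)).re) := by
  have hdiag : ∀ i, 0 ≤ (ρ i i).re ∧ (ρ i i).im = 0 := aux_diag_nonneg hρ
  have hsum1 : ∑ i, (ρ i i).re = 1 := by
    have := congrArg Complex.re htr
    simpa [Matrix.trace, Matrix.diag, Complex.re_sum] using this
  constructor
  · rintro ⟨k, l, hkl, hne⟩
    set r : ℝ := Complex.normSq (ρ k l) with hr
    have hrpos : 0 < r := Complex.normSq_pos.mpr hne
    set t : ℝ := (M - m + 1) / r with ht
    set D : Matrix (Fin d) (Fin d) ℂ :=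
      Matrix.diagonal (fun i => if i = l then (M : ℂ) else (m : ℂ)) with hD
    set C : Matrix (Fin d) (Fin d) ℂ :=
      Matrix.single k l ((t : ℂ) * ρ k l) +
        Matrix.single l k ((t : ℂ) * star (ρ k l)) with hC
    have hdentry : ∀ i, ((D + C) i i) = (if i = l then (M : ℂ) else (m : ℂ)) := by
      intro i
      have h1 : ¬(k = i ∧ l = i) := by rintro ⟨rfl, rfl⟩; exact hkl rfl
      have h2 : ¬(l = i ∧ k = i) := by rintro ⟨rfl, rfl⟩; exact hkl rfl
      simp [hD, hC, Matrix.single, Matrix.diagonal_apply, h1, h2]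
    refine ⟨D + C, ?_, ?_, ?_, ?_, ?_, ?_⟩
    · -- Hermitian
      rw [Matrix.IsHermitian, Matrix.conjTranspose_add]
      have hDh : Dᴴ = D := by
        rw [hD, Matrix.diagonal_conjTranspose]
        have hv : (star fun i : Fin d => if i = l then (M:ℂ) else (m:ℂ))
            = fun i : Fin d => if i = l then (M:ℂ) else (m:ℂ) := by
          funext i
          rcases em (i = l) with h | h <;> simp [Pi.star_apply, h]
        rw [hv]
      have hCh : Cᴴ = C := by
        rw [hC, Matrix.conjTranspose_add, aux_ct_std, aux_ct_std]
        have e1 : star ((t : ℂ) * ρ k l) = (t : ℂ) * star (ρ k l) := by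
          rw [star_mul', Complex.star_def, Complex.conj_ofReal]
        have e2 : star ((t : ℂ) * star (ρ k l)) = (t : ℂ) * ρ k l := by
          rw [star_mul', star_star, Complex.star_def, Complex.conj_ofReal]
        rw [e1, e2, add_comm]
      rw [hDh, hCh]
    · intro i
      rw [hdentry i]
      rcases em (i = l) with h | h <;> simp [h, hmM]
    · exact ⟨k, by rw [hdentry k]; simp [hkl]⟩
    · intro i
      rw [hdentry i]
      rcases em (i = l) with h | h <;> simp [h, hmM]
    · exact ⟨l, by rw [hdentry l]; simp⟩
    · -- the trace bound
      right
      have hlk : ρ l k = star (ρ k l) := by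
        have h := congrFun (congrFun hρ.1 l) k
        simpa [Matrix.conjTranspose_apply] using h.symm
      have hzz : ρ k l * (starRingEnd ℂ) (ρ k l) = (r : ℂ) := by
        rw [Complex.mul_conj]
      have htrD : Matrix.trace (D * ρ) = ∑ i, (if i = l then (M : ℂ) else (m : ℂ)) * ρ i i := by
        simp [hD, Matrix.trace, Matrix.diag, Matrix.diagonal_mul]
      have htrC : Matrix.trace (C * ρ) = ((2 * t * r : ℝ) : ℂ) := by
        rw [hC, Matrix.add_mul, Matrix.trace_add, aux_trace_std, aux_trace_std, hlk,
          Complex.star_def]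
        push_cast
        rw [mul_assoc, hzz, mul_assoc, mul_comm ((starRingEnd ℂ) (ρ k l)), hzz]
        ring
      have hWρ : Matrix.trace ((D + C) * ρ) = Matrix.trace (D * ρ) + Matrix.trace (C * ρ) := by
        rw [Matrix.add_mul, Matrix.trace_add]
      rw [hWρ, Complex.add_re, htrD, htrC]
      have hDre : (∑ i, (if i = l then (M : ℂ) else (m : ℂ)) * ρ i i).re
          = ∑ i, (if i = l then M else m) * (ρ i i).re := by
        rw [Complex.re_sum]
        congr 1; ext i
        rcases em (i = l) with h | h <;>
          simp [h, Complex.mul_re, (hdiag i).2]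
      rw [hDre]
      have hge : m ≤ ∑ i, (if i = l then M else m) * (ρ i i).re := by
        calc m = ∑ i, m * (ρ i i).re := by rw [← Finset.mul_sum, hsum1, mul_one]
          _ ≤ ∑ i, (if i = l then M else m) * (ρ i i).re := by
            apply Finset.sum_le_sum
            intro i _
            apply mul_le_mul_of_nonneg_right _ (hdiag i).1
            rcases em (i = l) with h | h <;> simp [h, hmM]
      have htr' : 2 * t * r = 2 * (M - m + 1) := by
        rw [ht]; field_simp
      have hcre : ((2 * t * r : ℝ) : ℂ).re = 2 * (M - m + 1) := by
        rw [htr']; simp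
      rw [hcre]
      linarith
  · rintro ⟨W, hW, hm, _, hM, _, hout⟩
    by_contra h
    push_neg at h
    have hdiagρ : ∀ k l, k ≠ l → ρ k l = 0 := h
    have htrWρ : Matrix.trace (W * ρ) = ∑ i, W i i * ρ i i := by
      rw [Matrix.trace]
      congr 1; ext i
      rw [Matrix.diag, Matrix.mul_apply, Finset.sum_eq_single i]
      · intro b _ hb
        rw [hdiagρ b i hb, mul_zero]
      · simp
    have hWr : ∀ i, (W i i).im = 0 := by
      intro i
      have h1 := hW.coe_re_apply_self i
      have h2 := congrArg Complex.im h1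
      simpa using h2.symm
    have hre : (Matrix.trace (W * ρ)).re = ∑ i, (W i i).re * (ρ i i).re := by
      rw [htrWρ, Complex.re_sum]
      congr 1; ext i
      simp [Complex.mul_re, hWr i, (hdiag i).2]
    have hlb : m ≤ (Matrix.trace (W * ρ)).re := by
      rw [hre]
      calc m = ∑ i, m * (ρ i i).re := by rw [← Finset.mul_sum, hsum1, mul_one]
        _ ≤ ∑ i, (W i i).re * (ρ i i).re :=
          Finset.sum_le_sum fun i _ => mul_le_mul_of_nonneg_right (hm i) (hdiag i).1
    have hub : (Matrix.trace (W * ρ)).re ≤ M := by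
      rw [hre]
      calc ∑ i, (W i i).re * (ρ i i).re ≤ ∑ i, M * (ρ i i).re :=
          Finset.sum_le_sum fun i _ => mul_le_mul_of_nonneg_right (hM i) (hdiag i).1
        _ = M := by rw [← Finset.mul_sum, hsum1, mul_one]
    rcases hout with h1 | h1 <;> linarith
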